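/- Let G be a finite simple graph, let c(G) denote the minimal size of a vertex cover of G, and let m(G) denote the maximal size of a set of pairwise disjoint edges of G. If c(G) > m(G) = n−1, then G contains an odd cycle of length at most 2n−1. -/

import Mathlib

/-- A finset `C` of vertices is a vertex cover of `G` if every edge of `G` has at least
one endpoint in `C`. -/
def IsVertexCover {V : Type*} (G : SimpleGraph V) (C : Finset V) : Prop :=
  ∀ u v : V, G.Adj u v → u ∈ C ∨ v ∈ C

/-- A finset `M` of edges of `G` is a matching (a set of pairwise disjoint edges) if no
two distinct edges of `M` share a vertex. -/
def IsMatchingSet {V : Type*} (G : SimpleGraph V) (M : Finset (Sym2 V)) : Prop :=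
  (M : Set (Sym2 V)) ⊆ G.edgeSet ∧
    (M : Set (Sym2 V)).Pairwise fun e f => ∀ v : V, ¬(v ∈ e ∧ v ∈ f)

open SimpleGraph

/-- Surgery: a walk with a repeated vertex contains a nontrivial closed subwalk. -/
private lemma walk_surgery {V : Type*} [DecidableEq V] {G : SimpleGraph V} :
    ∀ {a b : V} (p : G.Walk a b), ¬ p.support.Nodup →
      ∃ (u : V) (c : G.Walk a u) (q : G.Walk u u) (r : G.Walk u b),
        0 < q.length ∧ c.length + q.length + r.length = p.length := by
  intro a b p
  induction p with
  | nil => intro h; simp at h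
  | @cons a x b h' p' ih =>
    intro hnd
    rw [Walk.support_cons, List.nodup_cons] at hnd
    by_cases ha : a ∈ p'.support
    · refine ⟨a, Walk.nil, Walk.cons h' (p'.takeUntil a ha), p'.dropUntil a ha, by simp, ?_⟩
      have h2 := congrArg Walk.length (p'.take_spec ha)
      rw [Walk.length_append] at h2
      simp only [Walk.length_nil, Walk.length_cons]
      omega
    · have h3 : ¬ p'.support.Nodup := by tauto
      obtain ⟨u, c, q, r, h1, h2⟩ := ih h3
      exact ⟨u, Walk.cons h' c, q, r, h1, by simp only [Walk.length_cons]; omega⟩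

/-- In a path from `a` to `b`, if the edge `s(b,a)` occurs then the path has length 1. -/
private lemma path_edge_end {V : Type*} {G : SimpleGraph V} :
    ∀ {a b : V} (p : G.Walk a b), p.IsPath → s(b, a) ∈ p.edges → p.length = 1 := by
  intro a b p
  induction p with
  | nil => intro _ he; simp at he
  | @cons a x b h' p' ih =>
    intro hp he
    rw [Walk.cons_isPath_iff] at hp
    rw [Walk.edges_cons, List.mem_cons] at he
    rcases he with he | he
    · rw [Sym2.eq_iff] at he
      rcases he with ⟨hb, hx⟩ | ⟨hb, -⟩
      · exact absurd (hb ▸ p'.end_mem_support) hp.2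
      · subst hb
        have := Walk.isPath_iff_eq_nil.mp hp.1
        subst this
        simp
    · exact absurd (p'.snd_mem_support_of_mem_edges he) hp.2

/-- Any odd closed walk contains an odd cycle of no greater length. -/
private lemma exists_odd_cycle_of_odd_closed_walk {V : Type*} [DecidableEq V] {G : SimpleGraph V} :
    ∀ (L : ℕ) {v : V} (w : G.Walk v v), w.length = L → Odd w.length →
      ∃ (u : V) (c : G.Walk u u), c.IsCycle ∧ Odd c.length ∧ c.length ≤ w.length := by
  intro L
  induction L using Nat.strong_induction_on with
  | _ L ih =>
    intro v w hL hodd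
    cases w with
    | nil => simp [Nat.odd_iff] at hodd
    | @cons _ x _ h' p =>
      by_cases hnd : p.support.Nodup
      · have hp : p.IsPath := Walk.IsPath.mk' hnd
        by_cases he : s(v, x) ∈ p.edges
        · have h1 := path_edge_end p hp he
          rw [Walk.length_cons, h1] at hodd
          norm_num [Nat.odd_iff] at hodd
        · exact ⟨v, Walk.cons h' p, (Walk.cons_isCycle_iff p h').mpr ⟨hp, he⟩, hodd, le_rfl⟩
      · obtain ⟨u, c, q, r, hq, hsum⟩ := walk_surgery p hnd
        rw [Walk.length_cons] at hodd hL
        rw [Nat.odd_iff] at hodd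
        by_cases hq2 : Odd q.length
        · obtain ⟨u', c', hc, ho, hle⟩ := ih q.length (by omega) q rfl hq2
          exact ⟨u', c', hc, ho, by rw [Walk.length_cons]; omega⟩
        · rw [Nat.not_odd_iff_even, Nat.even_iff] at hq2
          have hlen : (Walk.cons h' (c.append r)).length = 1 + (c.length + r.length) := by
            rw [Walk.length_cons, Walk.length_append]; omega
          have hodd2 : Odd (Walk.cons h' (c.append r)).length := by
            rw [hlen, Nat.odd_iff]; omega
          obtain ⟨u', c', hc, ho, hle⟩ :=
            ih (Walk.cons h' (c.append r)).length (by rw [hlen]; omega)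
              (Walk.cons h' (c.append r)) rfl hodd2
          refine ⟨u', c', hc, ho, ?_⟩
          rw [hlen] at hle
          rw [Walk.length_cons]
          omega

/-- A path of length `l` contains a matching of size `(l+1)/2`, supported on the path. -/
private lemma path_matching {V : Type*} [DecidableEq V] {G : SimpleGraph V} :
    ∀ (L : ℕ) {a b : V} (p : G.Walk a b), p.length = L → p.IsPath →
      ∃ M : Finset (Sym2 V), IsMatchingSet G M ∧ M.card = (p.length + 1) / 2 ∧
        ∀ e ∈ M, ∀ x : V, x ∈ e → x ∈ p.support := by
  intro L
  induction L using Nat.strong_induction_on with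
  | _ L ih =>
    intro a b p hL hp
    cases p with
    | nil => exact ⟨∅, ⟨by simp, by simp⟩, by simp, by simp⟩
    | @cons _ x _ h1 p' =>
      cases p' with
      | nil =>
        refine ⟨{s(a, b)}, ⟨?_, by simp [Set.Pairwise]⟩, by simp, ?_⟩
        · intro e he
          simp only [Finset.coe_singleton, Set.mem_singleton_iff] at he
          subst he
          exact h1
        · intro e he y hy
          simp only [Finset.mem_singleton] at he
          subst he
          rw [Sym2.mem_iff] at hy
          simp only [Walk.support_cons, Walk.support_nil, List.mem_cons,
            List.mem_singleton, List.not_mem_nil]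
          tauto
      | @cons _ y _ h2 p'' =>
        rw [Walk.cons_isPath_iff] at hp
        have hp2 := hp.1
        rw [Walk.cons_isPath_iff] at hp2
        have hL2 : (Walk.cons h1 (Walk.cons h2 p'')).length = p''.length + 2 := by
          simp [Walk.length_cons]
        obtain ⟨M, hM, hcard, hsup⟩ := ih p''.length (by omega) p'' rfl hp2.1
        have haxs : a ∉ (Walk.cons h2 p'').support := hp.2
        rw [Walk.support_cons, List.mem_cons] at haxs
        push_neg at haxs
        have hax : a ∉ p''.support := haxs.2
        have hxp : x ∉ p''.support := hp2.2
        have hnotmem : s(a, x) ∉ M := by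
          intro hmem
          exact hax (hsup _ hmem a (by simp))
        refine ⟨insert s(a, x) M, ⟨?_, ?_⟩, ?_, ?_⟩
        · intro e he
          simp only [Finset.coe_insert, Set.mem_insert_iff, Finset.mem_coe] at he
          rcases he with rfl | he
          · exact h1
          · exact hM.1 he
        · rw [Finset.coe_insert]
          apply Set.Pairwise.insert hM.2
          intro e he hne
          have hkey : ∀ v : V, ¬(v ∈ s(a, x) ∧ v ∈ e) := by
            rintro v ⟨hv1, hv2⟩
            have hvp : v ∈ p''.support := hsup _ (Finset.mem_coe.mp he) v hv2
            rw [Sym2.mem_iff] at hv1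
            rcases hv1 with rfl | rfl
            · exact hax hvp
            · exact hxp hvp
          exact ⟨hkey, fun v hv => hkey v ⟨hv.2, hv.1⟩⟩
        · rw [Finset.card_insert_of_notMem hnotmem, hcard, hL2]
          have := p''.length
          omega
        · intro e he z hz
          rw [Finset.mem_insert] at he
          rcases he with rfl | he
          · rw [Sym2.mem_iff] at hz
            simp only [Walk.support_cons, List.mem_cons]
            tauto
          · have := hsup e he z hz
            simp only [Walk.support_cons, List.mem_cons]
            tauto

private lemma no_odd_walk_contradiction {V : Type*} [Fintype V] [DecidableEq V]
    (G : SimpleGraph V) (n : ℕ) (hn : 1 ≤ n)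
    (hmatch' : ∀ M : Finset (Sym2 V), IsMatchingSet G M → M.card ≤ n - 1)
    (hcover : ∀ C : Finset V, _root_.IsVertexCover G C → n - 1 < C.card)
    (hodd : ∀ (v : V) (w : G.Walk v v), ¬ Odd w.length) : False := by
  classical
  -- parity of walks between fixed endpoints is well-defined
  have hpar : ∀ {a b : V} (p q : G.Walk a b), (Odd p.length ↔ Odd q.length) := by
    intro a b p q
    have h := hodd a (p.append q.reverse)
    rw [Walk.length_append, Walk.length_reverse, Nat.not_odd_iff_even, Nat.even_iff] at h
    rw [Nat.odd_iff, Nat.odd_iff]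
    omega
  -- the 2-coloring
  have hreach : ∀ v : V, G.Reachable ((G.connectedComponentMk v).out) v := by
    intro v
    exact ConnectedComponent.exact (Quot.out_eq _)
  let wlk : (v : V) → G.Walk ((G.connectedComponentMk v).out) v := fun v => (hreach v).some
  let col : V → Prop := fun v => Odd (wlk v).length
  have hcol : ∀ {u v : V}, G.Adj u v → (col u ↔ ¬ col v) := by
    intro u v huv
    have hroot : (G.connectedComponentMk u).out = (G.connectedComponentMk v).out := by
      rw [ConnectedComponent.connectedComponentMk_eq_of_adj huv]
    have h := hpar ((wlk u).append (Walk.cons huv Walk.nil)) ((wlk v).copy hroot.symm rfl)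
    rw [Walk.length_append, Walk.length_copy, Walk.length_cons, Walk.length_nil] at h
    show Odd (wlk u).length ↔ ¬ Odd (wlk v).length
    simp only [Nat.odd_iff] at h ⊢
    omega
  let X : Finset V := Finset.univ.filter (fun v => ¬ col v)
  have hmemX : ∀ v : V, v ∈ X ↔ ¬ col v := by
    intro v; simp [X]
  have key : ∀ {u v : V}, G.Adj u v → (u ∈ X ↔ v ∉ X) := by
    intro u v huv
    rw [hmemX, hmemX]
    have := hcol huv
    tauto
  -- X is a vertex cover, so n ≤ X.card
  have hXcover : _root_.IsVertexCover G X := by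
    intro u v huv
    by_cases hu : u ∈ X
    · exact Or.inl hu
    · right
      have := (key huv).not.mp hu
      tauto
  have hXcard : n ≤ X.card := by
    have := hcover X hXcover
    omega
  -- neighborhoods
  let N : Finset V → Finset V := fun S => Finset.univ.filter (fun y => ∃ x ∈ S, G.Adj x y)
  have hNcover : ∀ S : Finset V, S ⊆ X → _root_.IsVertexCover G ((X \ S) ∪ N S) := by
    intro S hS u v huv
    by_cases hu : u ∈ X
    · by_cases hus : u ∈ S
      · exact Or.inr (Finset.mem_union_right _ (by simp [N]; exact ⟨u, hus, huv⟩))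
      · exact Or.inl (Finset.mem_union_left _ (Finset.mem_sdiff.mpr ⟨hu, hus⟩))
    · have hv : v ∈ X := by have := key huv; tauto
      by_cases hvs : v ∈ S
      · exact Or.inl (Finset.mem_union_right _ (by simp [N]; exact ⟨v, hvs, huv.symm⟩))
      · exact Or.inr (Finset.mem_union_left _ (Finset.mem_sdiff.mpr ⟨hv, hvs⟩))
  have hHallIneq : ∀ S : Finset V, S ⊆ X → S.card + n ≤ X.card + (N S).card := by
    intro S hS
    have h1 := hcover _ (hNcover S hS)
    have h2 : ((X \ S) ∪ N S).card ≤ (X \ S).card + (N S).card := Finset.card_union_le _ _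
    have h3 : (X \ S).card = X.card - S.card := Finset.card_sdiff_of_subset hS
    have h4 : S.card ≤ X.card := Finset.card_le_card hS
    omega
  -- Hall setup
  set D := X.card - n with hD
  let t : {x // x ∈ X} → Finset (V ⊕ Fin D) := fun x =>
    (Finset.univ.filter (fun y => G.Adj x.val y)).image Sum.inl ∪
      Finset.univ.image (Sum.inr : Fin D → V ⊕ Fin D)
  have hHall : ∀ s : Finset {x // x ∈ X}, s.card ≤ (s.biUnion t).card := by
    intro s
    rcases s.eq_empty_or_nonempty with rfl | ⟨x0, hx0⟩
    · simp
    · set S : Finset V := s.image Subtype.val with hSdef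
      have hSX : S ⊆ X := by
        intro z hz
        rw [hSdef, Finset.mem_image] at hz
        obtain ⟨x, -, rfl⟩ := hz
        exact x.2
      have hScard : S.card = s.card := Finset.card_image_of_injective _ Subtype.val_injective
      have sub1 : (N S).image (Sum.inl : V → V ⊕ Fin D) ⊆ s.biUnion t := by
        intro z hz
        rw [Finset.mem_image] at hz
        obtain ⟨y, hy, rfl⟩ := hz
        simp only [N, Finset.mem_filter, Finset.mem_univ, true_and] at hy
        obtain ⟨x, hxS, hadj⟩ := hy
        rw [hSdef, Finset.mem_image] at hxS
        obtain ⟨x', hx's, rfl⟩ := hxS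
        rw [Finset.mem_biUnion]
        refine ⟨x', hx's, ?_⟩
        apply Finset.mem_union_left
        rw [Finset.mem_image]
        exact ⟨y, by simp [hadj], rfl⟩
      have sub2 : (Finset.univ.image (Sum.inr : Fin D → V ⊕ Fin D)) ⊆ s.biUnion t := by
        intro z hz
        rw [Finset.mem_biUnion]
        exact ⟨x0, hx0, Finset.mem_union_right _ hz⟩
      have hdisj : Disjoint ((N S).image (Sum.inl : V → V ⊕ Fin D))
          (Finset.univ.image (Sum.inr : Fin D → V ⊕ Fin D)) := by
        rw [Finset.disjoint_left]
        intro z hz1 hz2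
        rw [Finset.mem_image] at hz1 hz2
        obtain ⟨y1, -, rfl⟩ := hz1
        obtain ⟨y2, -, h⟩ := hz2
        exact Sum.inl_ne_inr h.symm
      have hunion : ((N S).image (Sum.inl : V → V ⊕ Fin D) ∪
          Finset.univ.image (Sum.inr : Fin D → V ⊕ Fin D)) ⊆ s.biUnion t :=
        Finset.union_subset sub1 sub2
      have hcard1 : ((N S).image (Sum.inl : V → V ⊕ Fin D)).card = (N S).card :=
        Finset.card_image_of_injective _ Sum.inl_injective
      have hcard2 : (Finset.univ.image (Sum.inr : Fin D → V ⊕ Fin D)).card = D := by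
        rw [Finset.card_image_of_injective _ Sum.inr_injective, Finset.card_univ, Fintype.card_fin]
      have hle := Finset.card_le_card hunion
      rw [Finset.card_union_of_disjoint hdisj, hcard1, hcard2] at hle
      have := hHallIneq S hSX
      omega
  obtain ⟨f, hfinj, hft⟩ := (Finset.all_card_le_biUnion_card_iff_exists_injective t).mp hHall
  -- extract matching
  let P : Finset {x // x ∈ X} := Finset.univ.filter (fun x => (f x).isLeft)
  let nb : {x // x ∈ X} → V := fun x => Sum.elim id (fun _ => x.val) (f x)
  have hfP : ∀ x ∈ P, f x = Sum.inl (nb x) := by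
    intro x hx
    simp only [P, Finset.mem_filter, Finset.mem_univ, true_and] at hx
    cases hfx : f x with
    | inl y => simp [nb, hfx]
    | inr d => rw [hfx] at hx; simp at hx
  have hadjP : ∀ x ∈ P, G.Adj x.val (nb x) := by
    intro x hx
    have h := hft x
    rw [hfP x hx] at h
    rw [Finset.mem_union] at h
    rcases h with h | h
    · rw [Finset.mem_image] at h
      obtain ⟨y, hy, hyeq⟩ := h
      rw [Sum.inl.injEq] at hyeq
      subst hyeq
      simpa using hy
    · rw [Finset.mem_image] at h
      obtain ⟨d, -, h⟩ := h
      exact absurd h (Sum.inr_ne_inl)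
  have hnbX : ∀ x ∈ P, nb x ∉ X := fun x hx => (key (hadjP x hx)).mp x.2
  -- card of P
  have hPcard : n ≤ P.card := by
    have hsplit : P.card + (Finset.univ.filter (fun x : {x // x ∈ X} => ¬ (f x).isLeft)).card
        = Fintype.card {x // x ∈ X} := by
      rw [← Finset.card_univ]
      exact Finset.card_filter_add_card_filter_not _
    have hQ : (Finset.univ.filter (fun x : {x // x ∈ X} => ¬ (f x).isLeft)).card ≤ D := by
      have : (Finset.univ.filter (fun x : {x // x ∈ X} => ¬ (f x).isLeft)).card ≤
          (Finset.univ.image (Sum.inr : Fin D → V ⊕ Fin D)).card := by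
        apply Finset.card_le_card_of_injOn f
        · intro x hx
          simp only [Finset.mem_coe, Finset.mem_filter, Finset.mem_univ, true_and] at hx
          cases hfx : f x with
          | inl y => rw [hfx] at hx; simp at hx
          | inr d => rw [Finset.mem_coe, Finset.mem_image]; exact ⟨d, Finset.mem_univ _, rfl⟩
        · exact fun a _ b _ h => hfinj h
      rwa [Finset.card_image_of_injective _ Sum.inr_injective, Finset.card_univ,
        Fintype.card_fin] at this
    have hXc : Fintype.card {x // x ∈ X} = X.card := Fintype.card_coe X
    omega
  -- the matching
  let M : Finset (Sym2 V) := P.image (fun x => s(x.val, nb x))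
  have hMcard : M.card = P.card := by
    apply Finset.card_image_of_injOn
    intro x1 hx1 x2 hx2 heq
    rw [Sym2.eq_iff] at heq
    rcases heq with ⟨h1, -⟩ | ⟨h1, h2⟩
    · exact Subtype.ext h1
    · exact absurd (h1 ▸ x1.2) (hnbX x2 hx2)
  have hMmatch : IsMatchingSet G M := by
    constructor
    · intro e he
      rw [Finset.mem_coe, Finset.mem_image] at he
      obtain ⟨x, hx, rfl⟩ := he
      exact hadjP x hx
    · intro e1 he1 e2 he2 hne v hv
      rw [Finset.mem_coe, Finset.mem_image] at he1 he2
      obtain ⟨x1, hx1, rfl⟩ := he1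
      obtain ⟨x2, hx2, rfl⟩ := he2
      obtain ⟨hv1, hv2⟩ := hv
      rw [Sym2.mem_iff] at hv1 hv2
      rcases hv1 with rfl | rfl <;> rcases hv2 with h | h
      · have hx : x1 = x2 := Subtype.ext h
        subst hx
        exact hne rfl
      · exact hnbX x2 hx2 (h ▸ x1.2)
      · exact hnbX x1 hx1 (h.symm ▸ x2.2)
      · have hx : x1 = x2 := hfinj (by rw [hfP x1 hx1, hfP x2 hx2, h])
        subst hx
        exact hne rfl
  have hfinal := hmatch' M hMmatch
  omega

/-- Let `G` be a finite simple graph with minimal vertex cover size `c(G)` and maximal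
matching size `m(G)`. If `c(G) > m(G) = n - 1`, then `G` contains an odd cycle of length
at most `2n - 1`. -/
theorem exists_small_odd_cycle_of_cover_gt_matching {V : Type*} [Fintype V] [DecidableEq V]
    (G : SimpleGraph V) (n : ℕ) (hn : 1 ≤ n)
    (hmatch : ∃ M : Finset (Sym2 V), IsMatchingSet G M ∧ M.card = n - 1)
    (hmatch' : ∀ M : Finset (Sym2 V), IsMatchingSet G M → M.card ≤ n - 1)
    (hcover : ∀ C : Finset V, _root_.IsVertexCover G C → n - 1 < C.card) :
    ∃ (v : V) (w : G.Walk v v), w.IsCycle ∧ Odd w.length ∧ w.length ≤ 2 * n - 1 := by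
  classical
  by_cases hodd : ∃ (v : V) (w : G.Walk v v), Odd w.length
  · obtain ⟨v, w, hw⟩ := hodd
    obtain ⟨u, c, hc, hco, -⟩ := exists_odd_cycle_of_odd_closed_walk w.length w rfl hw
    refine ⟨u, c, hc, hco, ?_⟩
    cases c with
    | nil => exact absurd hc SimpleGraph.Walk.IsCycle.not_of_nil
    | @cons _ x _ h' p =>
      have hp := (SimpleGraph.Walk.cons_isCycle_iff p h').mp hc
      obtain ⟨M, hM, hcard, -⟩ := path_matching p.length p rfl hp.1
      have hle := hmatch' M hM
      rw [SimpleGraph.Walk.length_cons] at hco ⊢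
      rw [Nat.odd_iff] at hco
      omega
  · push_neg at hodd
    simp only [Nat.not_odd_iff_even] at hodd
    exact absurd (no_odd_walk_contradiction G n hn hmatch' hcover
      (fun v w => by rw [Nat.not_odd_iff_even]; exact hodd v w)) not_false
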